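/- arXiv:2405.06337 — 2 statements merged into one kernel-verified Lean document; each statement's English description precedes it below -/
import Mathlib

section
/- Let X be a reflexive Banach space, Y a Hilbert space, A : X → Y bounded linear, R : X → ℝ convex and Fréchet differentiable. Suppose f† ∈ X satisfies the source condition ∇R(f†) = A* w† for some w† ∈ Y, and let g^δ = A f† + δε with ‖ε‖_Y ≤ 1, δ > 0. If f_α minimizes f ↦ (1/2)‖A f − g^δ‖²_Y + α R(f), then (1/2)‖A(f_α − f†)‖²_Y + α D_R(f_α, f†) ≤ 2α²‖w†‖²_Y + δ²‖ε‖²_Y, where D_R(u,v) = ⟨∇R(u) − ∇R(v), u − v⟩ is the symmetric Bregman distance. -/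
/-- Deterministic error estimate under the source condition: if `∇R(f†) = A* w†`,
`g^δ = A f† + δ ε` with `‖ε‖ ≤ 1`, and `f_α` minimizes
`f ↦ (1/2)‖A f − g^δ‖² + α R(f)`, then
`(1/2)‖A(f_α − f†)‖² + α D_R(f_α, f†) ≤ 2α²‖w†‖² + δ²‖ε‖²`, where
`D_R(u,v) = ⟨∇R(u) − ∇R(v), u − v⟩` is the symmetric Bregman distance. -/
theorem stmt7 {X Y : Type*} [NormedAddCommGroup X] [NormedSpace ℝ X]
    [NormedAddCommGroup Y] [InnerProductSpace ℝ Y] [CompleteSpace Y]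
    (hrefl : Function.Bijective (NormedSpace.inclusionInDoubleDual ℝ X))
    (A : X →L[ℝ] Y) (R : X → ℝ) (R' : X → X →L[ℝ] ℝ)
    (hconv : ConvexOn ℝ Set.univ R) (hdiff : ∀ f, HasFDerivAt R (R' f) f)
    (fdag : X) (wdag : Y) (hsource : ∀ x : X, R' fdag x = (inner ℝ wdag (A x) : ℝ))
    (ε : Y) (hε : ‖ε‖ ≤ 1) (δ α : ℝ) (hδ : 0 < δ) (hα : 0 < α)
    (gδ : Y) (hg : gδ = A fdag + δ • ε)
    (fα : X)
    (hmin : ∀ f : X, (1 / 2) * ‖A fα - gδ‖ ^ 2 + α * R fα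
      ≤ (1 / 2) * ‖A f - gδ‖ ^ 2 + α * R f) :
    (1 / 2) * ‖A (fα - fdag)‖ ^ 2 + α * ((R' fα - R' fdag) (fα - fdag))
      ≤ 2 * α ^ 2 * ‖wdag‖ ^ 2 + δ ^ 2 * ‖ε‖ ^ 2 := by
  -- derivative of the objective at fα
  have hA : HasFDerivAt (fun f : X => A f - gδ) (A : X →L[ℝ] Y) fα :=
    A.hasFDerivAt.sub_const gδ
  have hF : HasFDerivAt (fun f : X => (1 / 2) * ‖A f - gδ‖ ^ 2 + α * R f)
      ((1 / 2 : ℝ) • (2 • (innerSL ℝ (A fα - gδ)).comp A) + α • R' fα) fα :=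
    (hA.norm_sq.const_mul (1 / 2)).add ((hdiff fα).const_mul α)
  have hloc : IsLocalMin (fun f : X => (1 / 2) * ‖A f - gδ‖ ^ 2 + α * R f) fα :=
    Filter.Eventually.of_forall hmin
  have hzero := hloc.hasFDerivAt_eq_zero hF
  -- first-order optimality condition
  have hopt : ∀ x : X, (inner ℝ (A fα - gδ) (A x) : ℝ) + α * R' fα x = 0 := by
    intro x
    have h := congrArg (fun (L : X →L[ℝ] ℝ) => L x) hzero
    simp only [ContinuousLinearMap.add_apply, ContinuousLinearMap.smul_apply,
      ContinuousLinearMap.comp_apply, innerSL_apply_apply, two_smul, smul_eq_mul,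
      ContinuousLinearMap.zero_apply] at h
    linarith
  have h1 := hopt (fα - fdag)
  set e : Y := A (fα - fdag) with he
  have heq : A fα - gδ = e - δ • ε := by
    simp [he, hg, map_sub]; abel
  have hinner : (inner ℝ (A fα - gδ) e : ℝ) = ‖e‖ ^ 2 - δ * (inner ℝ ε e : ℝ) := by
    rw [heq, inner_sub_left, real_inner_self_eq_norm_sq, real_inner_smul_left]
  have hsrc : R' fdag (fα - fdag) = (inner ℝ wdag e : ℝ) := hsource _
  have hbreg : α * ((R' fα - R' fdag) (fα - fdag))
      = -(‖e‖ ^ 2) + δ * (inner ℝ ε e : ℝ) - α * (inner ℝ wdag e : ℝ) := by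
    have hh : α * R' fα (fα - fdag) = -(‖e‖ ^ 2) + δ * (inner ℝ ε e : ℝ) := by
      rw [hinner] at h1; linarith
    rw [ContinuousLinearMap.sub_apply, hsrc, mul_sub, hh]
  clear hzero hF hloc hA hopt hmin hdiff hconv hsource h1 hinner
  set v : Y := δ • ε - α • wdag with hvdef
  have hexp : (inner ℝ v e : ℝ) = δ * (inner ℝ ε e : ℝ) - α * (inner ℝ wdag e : ℝ) := by
    rw [hvdef, inner_sub_left, real_inner_smul_left, real_inner_smul_left]
  have hy : (inner ℝ v e : ℝ) ≤ (1/2) * ‖e‖^2 + (1/2) * ‖v‖^2 := by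
    nlinarith [real_inner_le_norm v e, sq_nonneg (‖v‖ - ‖e‖)]
  have ha : ‖δ • ε‖ ^ 2 = δ ^ 2 * ‖ε‖ ^ 2 := by
    rw [norm_smul, mul_pow, Real.norm_eq_abs, sq_abs]
  have hb : ‖α • wdag‖ ^ 2 = α ^ 2 * ‖wdag‖ ^ 2 := by
    rw [norm_smul, mul_pow, Real.norm_eq_abs, sq_abs]
  have hv : ‖v‖ ^ 2 ≤ 2 * (δ ^ 2 * ‖ε‖ ^ 2) + 2 * (α ^ 2 * ‖wdag‖ ^ 2) := by
    have hnv : ‖v‖ ≤ ‖δ • ε‖ + ‖α • wdag‖ := hvdef ▸ norm_sub_le (δ • ε) (α • wdag)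
    have hsq : ‖v‖ ^ 2 ≤ (‖δ • ε‖ + ‖α • wdag‖) ^ 2 :=
      pow_le_pow_left₀ (norm_nonneg v) hnv 2
    nlinarith [sq_nonneg (‖δ • ε‖ - ‖α • wdag‖), ha, hb, hsq]
  have hw : (0:ℝ) ≤ α ^ 2 * ‖wdag‖ ^ 2 := by positivity
  rw [hbreg]
  rw [hexp] at hy
  linarith
end

section
/- Under the hypotheses of the deterministic error estimate (source condition ∇R(f†) = A*w†, noise ‖ε‖_Y ≤ 1), the symmetric Bregman distance satisfies D_R(f_α^δ, f†) ≤ 2α‖w†‖²_Y + 2δ²/α for every α > 0; choosing α = δ/‖w†‖_Y yields D_R(f_α^δ, f†) ≤ 2‖w†‖_Y · δ, i.e., a linear convergence rate in δ. -/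
private lemma stmt8_aux (α δ t c e p q D : ℝ) (hα : 0 < α) (hδ : 0 < δ)
    (hopt : t ^ 2 + δ * e + α * D = 0)
    (b1 : -t ≤ e) (b2 : -(c * t) ≤ p) (b3 : -c ≤ q) :
    (D - (p + δ * q)) * α ≤ α ^ 2 * c ^ 2 + δ ^ 2 := by
  nlinarith [sq_nonneg (2 * t - (δ + α * c)), sq_nonneg (δ - α * c),
    mul_le_mul_of_nonneg_left b1 hδ.le, mul_le_mul_of_nonneg_left b2 hα.le,
    mul_le_mul_of_nonneg_left b3 (mul_pos hα hδ).le]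


/-- Under the source condition `∇R(f†) = A* w†` and noise `‖ε‖ ≤ 1`, the symmetric
Bregman distance of the minimizers satisfies `D_R(f_α^δ, f†) ≤ 2α‖w†‖² + 2δ²/α` for
every `α > 0`; the choice `α = δ/‖w†‖` yields `D_R(f_α^δ, f†) ≤ 2‖w†‖ δ`. -/
theorem stmt8 {X Y : Type*} [NormedAddCommGroup X] [NormedSpace ℝ X]
    [NormedAddCommGroup Y] [InnerProductSpace ℝ Y] [CompleteSpace Y]
    (hrefl : Function.Bijective (NormedSpace.inclusionInDoubleDual ℝ X))
    (A : X →L[ℝ] Y) (R : X → ℝ) (R' : X → X →L[ℝ] ℝ)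
    (hconv : ConvexOn ℝ Set.univ R) (hdiff : ∀ f, HasFDerivAt R (R' f) f)
    (fdag : X) (wdag : Y) (hw : wdag ≠ 0)
    (hsource : ∀ x : X, R' fdag x = (inner ℝ wdag (A x) : ℝ))
    (ε : Y) (hε : ‖ε‖ ≤ 1) (δ : ℝ) (hδ : 0 < δ)
    (gδ : Y) (hg : gδ = A fdag + δ • ε)
    (F : ℝ → X)
    (hmin : ∀ α : ℝ, 0 < α → ∀ f : X,
      (1 / 2) * ‖A (F α) - gδ‖ ^ 2 + α * R (F α) ≤ (1 / 2) * ‖A f - gδ‖ ^ 2 + α * R f) :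
    (∀ α : ℝ, 0 < α →
      (R' (F α) - R' fdag) (F α - fdag) ≤ 2 * α * ‖wdag‖ ^ 2 + 2 * δ ^ 2 / α)
    ∧ (R' (F (δ / ‖wdag‖)) - R' fdag) (F (δ / ‖wdag‖) - fdag) ≤ 2 * ‖wdag‖ * δ := by
  have hwn : 0 < ‖wdag‖ := norm_pos_iff.mpr hw
  -- Key estimate: D ≤ α‖w‖² + δ²/α for every α > 0
  have key : ∀ α : ℝ, 0 < α →
      (R' (F α) - R' fdag) (F α - fdag) ≤ α * ‖wdag‖ ^ 2 + δ ^ 2 / α := by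
    intro α hα
    set u := F α with hu
    set r : Y := A u - gδ with hr
    -- derivative of f ↦ A f - gδ
    have h1 : HasFDerivAt (fun f : X => A f - gδ) (A : X →L[ℝ] Y) u :=
      A.hasFDerivAt.sub_const gδ
    -- derivative of f ↦ ⟪A f - gδ, A f - gδ⟫
    have h2 : HasFDerivAt (fun f : X => (inner ℝ (A f - gδ) (A f - gδ) : ℝ))
        ((fderivInnerCLM ℝ (r, r)).comp ((A : X →L[ℝ] Y).prod A)) u :=
      HasFDerivAt.inner ℝ h1 h1
    -- derivative of the Tikhonov functional
    have hΦ : HasFDerivAt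
        (fun f : X => (1 / 2) * (inner ℝ (A f - gδ) (A f - gδ) : ℝ) + α * R f)
        (((1 : ℝ) / 2) • ((fderivInnerCLM ℝ (r, r)).comp ((A : X →L[ℝ] Y).prod A))
          + α • R' u) u :=
      (h2.const_mul (1 / 2)).add ((hdiff u).const_mul α)
    -- u is a (global, hence local) minimizer of this functional
    have hloc : IsLocalMin
        (fun f : X => (1 / 2) * (inner ℝ (A f - gδ) (A f - gδ) : ℝ) + α * R f) u := by
      apply Filter.Eventually.of_forall
      intro f
      simp only [real_inner_self_eq_norm_sq]
      exact hmin α hα f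
    have hzero := hloc.hasFDerivAt_eq_zero hΦ
    -- optimality condition
    have hopt : ∀ x : X, (inner ℝ r (A x) : ℝ) + α * R' u x = 0 := by
      intro x
      have hx := DFunLike.congr_fun hzero x
      simp only [ContinuousLinearMap.add_apply, ContinuousLinearMap.smul_apply,
        ContinuousLinearMap.comp_apply, ContinuousLinearMap.prod_apply,
        fderivInnerCLM_apply, ContinuousLinearMap.zero_apply, smul_eq_mul] at hx
      have hc : (inner ℝ r (A x) : ℝ) = inner ℝ (A x) r := real_inner_comm _ _
      linarith
    -- key algebraic identities
    have hA : A (u - fdag) = r + δ • ε := by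
      rw [map_sub, hr, hg]; abel
    have e1 : (inner ℝ r (A (u - fdag)) : ℝ) = ‖r‖ ^ 2 + δ * (inner ℝ r ε : ℝ) := by
      rw [hA, inner_add_right, real_inner_smul_right, real_inner_self_eq_norm_sq]
    have e2 : (inner ℝ wdag (A (u - fdag)) : ℝ)
        = (inner ℝ wdag r : ℝ) + δ * (inner ℝ wdag ε : ℝ) := by
      rw [hA, inner_add_right, real_inner_smul_right]
    have hopt' := hopt (u - fdag)
    rw [e1] at hopt'
    -- Cauchy-Schwarz bounds
    have cs1 : |(inner ℝ r ε : ℝ)| ≤ ‖r‖ * ‖ε‖ := abs_real_inner_le_norm r ε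
    have cs2 : |(inner ℝ wdag r : ℝ)| ≤ ‖wdag‖ * ‖r‖ := abs_real_inner_le_norm wdag r
    have cs3 : |(inner ℝ wdag ε : ℝ)| ≤ ‖wdag‖ * ‖ε‖ := abs_real_inner_le_norm wdag ε
    have hrn : (0 : ℝ) ≤ ‖r‖ := norm_nonneg r
    have b1 : -‖r‖ ≤ (inner ℝ r ε : ℝ) := by
      nlinarith [neg_abs_le (inner ℝ r ε : ℝ)]
    have b2 : -(‖wdag‖ * ‖r‖) ≤ (inner ℝ wdag r : ℝ) := (abs_le.1 cs2).1
    have b3 : -‖wdag‖ ≤ (inner ℝ wdag ε : ℝ) := by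
      nlinarith [neg_abs_le (inner ℝ wdag ε : ℝ)]
    -- assemble
    have hD : (R' u - R' fdag) (u - fdag)
        = R' u (u - fdag) - ((inner ℝ wdag r : ℝ) + δ * (inner ℝ wdag ε : ℝ)) := by
      rw [ContinuousLinearMap.sub_apply, hsource, e2]
    rw [hD]
    have hfrac : α * ‖wdag‖ ^ 2 + δ ^ 2 / α = (α ^ 2 * ‖wdag‖ ^ 2 + δ ^ 2) / α := by
      field_simp
    rw [hfrac, le_div_iff₀ hα]
    exact stmt8_aux α δ ‖r‖ ‖wdag‖ (inner ℝ r ε) (inner ℝ wdag r) (inner ℝ wdag ε)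
      (R' u (u - fdag)) hα hδ hopt' b1 b2 b3
  constructor
  · intro α hα
    have h := key α hα
    have h1 : 0 ≤ α * ‖wdag‖ ^ 2 := by positivity
    have h2 : 0 ≤ δ ^ 2 / α := by positivity
    have : 2 * δ ^ 2 / α = 2 * (δ ^ 2 / α) := by ring
    linarith [this ▸ le_refl (2 * δ ^ 2 / α)]
  · have hα : 0 < δ / ‖wdag‖ := div_pos hδ hwn
    have h := key (δ / ‖wdag‖) hα
    have e1 : δ / ‖wdag‖ * ‖wdag‖ ^ 2 = ‖wdag‖ * δ := by
      field_simp
    have e2 : δ ^ 2 / (δ / ‖wdag‖) = ‖wdag‖ * δ := by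
      field_simp
    linarith
end
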